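/- arXiv:1611.04005 — 6 statements merged into one kernel-verified Lean document; each statement's English description precedes it below -/
import Mathlib

section
/- Let N → L₁ ⊕ L₂ → M → N⟦1⟧ be a distinguished triangle whose first morphism has components (f₁, f₂) with f₂ = 0 (i.e. the morphism N → L₁ ⊕ L₂ is (f₁, 0)). Then there exist an object M′ and morphisms g′ : L₁ → M′, h′ : M′ → N⟦1⟧ such that N →f₁ L₁ →g′ M′ →h′ N⟦1⟧ is a distinguished triangle and the given triangle is isomorphic (as a triangle) to the direct sum of this triangle with the contractible triangle 0 → L₂ →𝟙 L₂ → 0. In particular M ≅ M′ ⊕ L₂. -/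
open CategoryTheory CategoryTheory.Limits CategoryTheory.Pretriangulated ZeroObject

section Aux

variable {C : Type*} [Category C] [Preadditive C] [HasZeroObject C]
    [HasShift C ℤ] [∀ n : ℤ, (shiftFunctor C n).Additive] [Pretriangulated C]
    [HasBinaryBiproducts C]

/-- The binary direct sum triangle of `N → L₁ → M' → N⟦1⟧` with the contractible
triangle `0 → L₂ → L₂ → 0` is distinguished. -/
lemma aux_sum_distinguished (N L₁ L₂ M' : C) (f₁ : N ⟶ L₁) (g' : L₁ ⟶ M')
    (h' : M' ⟶ N⟦(1 : ℤ)⟧) (hT₁ : Triangle.mk f₁ g' h' ∈ distTriang C) :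
    Triangle.mk (biprod.lift f₁ (0 : N ⟶ L₂))
      (biprod.map g' (𝟙 L₂)) (biprod.fst ≫ h') ∈ distTriang C := by
  have : HasFiniteProducts C := hasFiniteProducts_of_has_binary_and_terminal
  set T₁ : Triangle C := Triangle.mk f₁ g' h' with hT₁def
  set T₂ : Triangle C := Triangle.mk (0 : (0 : C) ⟶ L₂) (𝟙 L₂) 0 with hT₂def
  have hT₂ : T₂ ∈ distTriang C := contractible_distinguished₁ L₂
  set Ts : Bool → Triangle C := fun b => Bool.rec T₂ T₁ b with hTs
  have hTs' : ∀ b, Ts b ∈ distTriang C := by rintro (_|_) <;> assumption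
  set T' : Triangle C := Triangle.mk (biprod.lift f₁ (0 : N ⟶ L₂))
      (biprod.map g' (𝟙 L₂)) (biprod.fst ≫ h') with hT'def
  -- morphisms from `T'` to each `Ts b`
  let φt : T' ⟶ Ts true :=
    { hom₁ := 𝟙 N
      hom₂ := biprod.fst
      hom₃ := biprod.fst
      comm₁ := by simp [T', Ts, T₁, Triangle.mk]
      comm₂ := by simp [T', Ts, T₁, Triangle.mk]
      comm₃ := by simp [T', Ts, T₁, Triangle.mk] }
  let φf : T' ⟶ Ts false :=
    { hom₁ := 0
      hom₂ := biprod.snd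
      hom₃ := biprod.snd
      comm₁ := by simp [T', Ts, T₂, Triangle.mk]; exact comp_zero.symm
      comm₂ := by simp [T', Ts, T₂, Triangle.mk]
      comm₃ := by erw [Functor.map_zero]; simp [T', Ts, T₂, Triangle.mk]; exact comp_zero }
  let φ : ∀ b, T' ⟶ Ts b := fun b => Bool.rec φf φt b
  let φ' := productTriangle.lift Ts φ
  have h1 : IsIso φ'.hom₁ := by
    refine ⟨Pi.π _ true, ?_, ?_⟩
    · simp only [φ', φ, φt, productTriangle.lift_hom₁, limit.lift_π, Fan.mk_π_app]
      exact Pi.lift_π _ _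
    · apply limit.hom_ext
      rintro ⟨(_|_)⟩
      · apply (isZero_zero C).eq_of_tgt
      · simp [φ', φ, φt, Pi.π]
        exact (Category.assoc _ _ _).trans ((congrArg _ (Pi.lift_π _ true)).trans
          ((Category.comp_id _).trans (Category.id_comp _).symm))
  have h2 : IsIso φ'.hom₂ := by
    refine ⟨biprod.lift (Pi.π _ true) (Pi.π _ false), ?_, ?_⟩
    · apply biprod.hom_ext
      · exact (Category.assoc _ _ _).trans ((congrArg _ (biprod.lift_fst _ _)).trans
          ((Pi.lift_π _ true).trans (Category.id_comp _).symm))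
      · exact (Category.assoc _ _ _).trans ((congrArg _ (biprod.lift_snd _ _)).trans
          ((Pi.lift_π _ false).trans (Category.id_comp _).symm))
    · apply limit.hom_ext
      rintro ⟨(_|_)⟩
      · simp [φ', φ, φt, φf, Pi.π]
        exact (Category.assoc _ _ _).trans ((congrArg _ (Pi.lift_π _ false)).trans
          ((biprod.lift_snd _ _).trans (Category.id_comp _).symm))
      · simp [φ', φ, φt, φf, Pi.π]
        exact (Category.assoc _ _ _).trans ((congrArg _ (Pi.lift_π _ true)).trans
          ((biprod.lift_fst _ _).trans (Category.id_comp _).symm))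
  have h3 : IsIso φ'.hom₃ := by
    refine ⟨biprod.lift (Pi.π _ true) (Pi.π _ false), ?_, ?_⟩
    · apply biprod.hom_ext
      · exact (Category.assoc _ _ _).trans ((congrArg _ (biprod.lift_fst _ _)).trans
          ((Pi.lift_π _ true).trans (Category.id_comp _).symm))
      · exact (Category.assoc _ _ _).trans ((congrArg _ (biprod.lift_snd _ _)).trans
          ((Pi.lift_π _ false).trans (Category.id_comp _).symm))
    · apply limit.hom_ext
      rintro ⟨(_|_)⟩
      · simp [φ', φ, φt, φf, Pi.π]
        exact (Category.assoc _ _ _).trans ((congrArg _ (Pi.lift_π _ false)).trans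
          ((biprod.lift_snd _ _).trans (Category.id_comp _).symm))
      · simp [φ', φ, φt, φf, Pi.π]
        exact (Category.assoc _ _ _).trans ((congrArg _ (Pi.lift_π _ true)).trans
          ((biprod.lift_fst _ _).trans (Category.id_comp _).symm))
  have : IsIso φ' := Triangle.isIso_of_isIsos φ' h1 h2 h3
  exact isomorphic_distinguished _ (productTriangle_distinguished Ts hTs') _ (asIso φ')

end Aux

/-- If `N → L₁ ⊞ L₂ → M → N⟦1⟧` is a distinguished triangle whose first
morphism is `(f₁, 0)`, then there is a distinguished triangle `N → L₁ → M′ → N⟦1⟧`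
such that the given triangle is isomorphic to the direct sum of this triangle with the
contractible triangle `0 → L₂ → L₂ → 0`; in particular `M ≅ M′ ⊞ L₂`. -/
theorem stmt0 {C : Type*} [Category C] [Preadditive C] [HasZeroObject C]
    [HasShift C ℤ] [∀ n : ℤ, (shiftFunctor C n).Additive] [Pretriangulated C]
    [HasBinaryBiproducts C]
    (N L₁ L₂ M : C) (f₁ : N ⟶ L₁) (g : L₁ ⊞ L₂ ⟶ M) (h : M ⟶ N⟦(1 : ℤ)⟧)
    (hT : Triangle.mk (biprod.lift f₁ 0) g h ∈ distTriang C) :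
    ∃ (M' : C) (g' : L₁ ⟶ M') (h' : M' ⟶ N⟦(1 : ℤ)⟧),
      (Triangle.mk f₁ g' h' ∈ distTriang C) ∧
      Nonempty ((Triangle.mk (biprod.lift f₁ 0) g h : Triangle C) ≅
        Triangle.mk (biprod.lift f₁ (0 : N ⟶ L₂))
          (biprod.map g' (𝟙 L₂)) (biprod.fst ≫ h')) ∧
      Nonempty (M ≅ M' ⊞ L₂) := by
  obtain ⟨M', g', h', hT₁⟩ := distinguished_cocone_triangle f₁
  have hT' := aux_sum_distinguished N L₁ L₂ M' f₁ g' h' hT₁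
  -- morphism from the completed triangle to the given one
  obtain ⟨c, hc₁, hc₂⟩ := complete_distinguished_triangle_morphism
    (Triangle.mk f₁ g' h') (Triangle.mk (biprod.lift f₁ 0) g h) hT₁ hT
    (𝟙 N) biprod.inl (by apply biprod.hom_ext <;> simp [Triangle.mk])
  dsimp [Triangle.mk] at hc₁ hc₂
  rw [CategoryTheory.Functor.map_id, Category.comp_id] at hc₂
  let ψ : (Triangle.mk (biprod.lift f₁ (0 : N ⟶ L₂))
      (biprod.map g' (𝟙 L₂)) (biprod.fst ≫ h') : Triangle C) ⟶
      Triangle.mk (biprod.lift f₁ 0) g h :=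
    { hom₁ := 𝟙 N
      hom₂ := 𝟙 (L₁ ⊞ L₂)
      hom₃ := biprod.desc c (biprod.inr ≫ g)
      comm₁ := by simp [Triangle.mk]
      comm₂ := by
        apply biprod.hom_ext' <;> simp [hc₁, Triangle.mk]
        · exact (congrArg (g' ≫ ·) (biprod.inl_desc c (biprod.inr ≫ g))).trans hc₁
        · exact biprod.inr_desc c (biprod.inr ≫ g)
      comm₃ := by
        have hz : g ≫ h = 0 := comp_distTriang_mor_zero₂₃ _ hT
        apply biprod.hom_ext'
        · simp [hc₂, Triangle.mk]
          exact (biprod.inl_desc_assoc _ _ _).symm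
        · simp [hz, Triangle.mk]
          exact ((biprod.inr_desc_assoc _ _ _).trans (by simp [hz])).symm }
  have hψ1 : IsIso ψ.hom₁ := ⟨𝟙 N, by simp [ψ, Triangle.mk], by simp [ψ, Triangle.mk]⟩
  have hψ2 : IsIso ψ.hom₂ := ⟨𝟙 (L₁ ⊞ L₂), by simp [ψ, Triangle.mk], by simp [ψ, Triangle.mk]⟩
  have hψ3 : IsIso ψ.hom₃ := isIso₃_of_isIso₁₂ ψ hT' hT hψ1 hψ2
  have : IsIso ψ := Triangle.isIso_of_isIsos ψ hψ1 hψ2 hψ3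
  exact ⟨M', g', h', hT₁, ⟨(asIso ψ).symm⟩, ⟨(asIso ψ.hom₃).symm⟩⟩
end

section
/- Let N → L₁ ⊕ L₂ →g M → N⟦1⟧ be a distinguished triangle such that the component g₂ = ι₂ ≫ g : L₂ → M of the second morphism is zero. Then there exist an object N′ and morphisms f′ : N′ → L₁, h′ : M → N′⟦1⟧ such that N′ →f′ L₁ → M →h′ N′⟦1⟧ is a distinguished triangle and the given triangle is isomorphic (as a triangle) to the direct sum of this triangle with the contractible triangle L₂ →𝟙 L₂ → 0 → L₂⟦1⟧. In particular N ≅ N′ ⊕ L₂. -/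
open CategoryTheory CategoryTheory.Limits CategoryTheory.Pretriangulated

section Aux

variable {C : Type*} [Category C] [Preadditive C] [HasZeroObject C]
    [HasShift C ℤ] [∀ n : ℤ, (shiftFunctor C n).Additive] [Pretriangulated C]
    [HasBinaryBiproducts C]

/-- The binary biproduct is isomorphic to the categorical product over `WalkingPair`. -/
noncomputable def biprodIsoPi' (f : WalkingPair → C) [HasProduct f] :
    f WalkingPair.left ⊞ f WalkingPair.right ≅ ∏ᶜ f where
  hom := Pi.lift (fun j => WalkingPair.casesOn j biprod.fst biprod.snd)
  inv := biprod.lift (Pi.π f .left) (Pi.π f .right)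
  hom_inv_id := by ext <;> simp
  inv_hom_id := by apply Pi.hom_ext; rintro (_|_) <;> simp

/-- The direct sum of a distinguished triangle with the contractible triangle on `X`
is distinguished. -/
lemma sum_contractible_distinguished (T₁ : Triangle C) (hT₁ : T₁ ∈ distTriang C) (X : C) :
    Triangle.mk (biprod.map T₁.mor₁ (𝟙 X)) (biprod.desc T₁.mor₂ 0)
      (T₁.mor₃ ≫ (biprod.inl : T₁.obj₁ ⟶ T₁.obj₁ ⊞ X)⟦(1:ℤ)⟧') ∈ distTriang C := by
  have : HasFiniteProducts C := hasFiniteProducts_of_has_binary_and_terminal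
  let Tf : WalkingPair → Triangle C := fun j => j.casesOn T₁ ⟨X, X, (contractibleTriangle X).obj₃, 𝟙 X, 0, 0⟩
  let e₃ : T₁.obj₃ ≅ ∏ᶜ (fun j => (Tf j).obj₃) :=
    { hom := Pi.lift (fun j => WalkingPair.casesOn j (𝟙 _) 0)
      inv := Pi.π _ WalkingPair.left
      hom_inv_id := by simp
      inv_hom_id := by
        apply Pi.hom_ext; rintro (_|_)
        · simp
        · apply (isZero_zero C).eq_of_tgt }
  refine isomorphic_distinguished _ (productTriangle_distinguished Tf
    (by rintro (_|_); exacts [hT₁, contractible_distinguished X])) _ ?_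
  refine Triangle.isoMk _ _ (biprodIsoPi' fun j => (Tf j).obj₁)
    (biprodIsoPi' fun j => (Tf j).obj₂) e₃ ?_ ?_ ?_
  all_goals dsimp only [Triangle.mk, productTriangle]
  · apply Pi.hom_ext; rintro (_|_) <;> simp [biprodIsoPi', Tf, e₃]
  · apply Pi.hom_ext; rintro (_|_)
    · simp only [biprodIsoPi', Tf, e₃]
      simp
      ext <;> simp
    · apply (isZero_zero C).eq_of_tgt
  · dsimp [biprodIsoPi', e₃]
    rw [← cancel_mono (piComparison _ _)]
    simp only [Category.assoc, IsIso.inv_hom_id, Category.comp_id]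
    apply Pi.hom_ext; intro j
    simp only [Category.assoc, piComparison_comp_π]
    rcases j with _|_
    · simp [Tf, ← Functor.map_comp]
    · simp [Tf, ← Functor.map_comp]

end Aux

/-- If `N → L₁ ⊞ L₂ →g M → N⟦1⟧` is a distinguished triangle whose
component `g₂ = ι₂ ≫ g : L₂ ⟶ M` is zero, then there is a distinguished triangle
`N′ →f′ L₁ → M →h′ N′⟦1⟧` such that the given triangle is isomorphic to the direct sum
of this triangle with the contractible triangle `L₂ → L₂ → 0 → L₂⟦1⟧`;
in particular `N ≅ N′ ⊞ L₂`. -/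
theorem stmt1 {C : Type*} [Category C] [Preadditive C] [HasZeroObject C]
    [HasShift C ℤ] [∀ n : ℤ, (shiftFunctor C n).Additive] [Pretriangulated C]
    [HasBinaryBiproducts C]
    (N L₁ L₂ M : C) (f : N ⟶ L₁ ⊞ L₂) (g : L₁ ⊞ L₂ ⟶ M) (h : M ⟶ N⟦(1 : ℤ)⟧)
    (hT : Triangle.mk f g h ∈ distTriang C)
    (hg : biprod.inr ≫ g = 0) :
    ∃ (N' : C) (f' : N' ⟶ L₁) (h' : M ⟶ N'⟦(1 : ℤ)⟧),
      (Triangle.mk f' (biprod.inl ≫ g) h' ∈ distTriang C) ∧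
      Nonempty ((Triangle.mk f g h : Triangle C) ≅
        Triangle.mk (biprod.map f' (𝟙 L₂)) (biprod.desc (biprod.inl ≫ g) 0)
          (h' ≫ (biprod.inl : N' ⟶ N' ⊞ L₂)⟦(1 : ℤ)⟧')) ∧
      Nonempty (N ≅ N' ⊞ L₂) := by
  obtain ⟨N', f', h', hT'⟩ := distinguished_cocone_triangle₁ (biprod.inl ≫ g)
  have hT₂ := sum_contractible_distinguished (Triangle.mk f' (biprod.inl ≫ g) h') hT' L₂
  have comm : (Triangle.mk f g h).rotate.mor₁ ≫ (𝟙 M) =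
      (Iso.refl (L₁ ⊞ L₂)).hom ≫ (Triangle.mk (biprod.map f' (𝟙 L₂))
        (biprod.desc (biprod.inl ≫ g) 0)
        (h' ≫ (biprod.inl : N' ⟶ N' ⊞ L₂)⟦(1 : ℤ)⟧')).rotate.mor₁ := by
    dsimp [Triangle.mk, Triangle.rotate]
    ext <;> simp [hg]
  have e := isoTriangleOfIso₁₂ _ _ (rot_of_distTriang _ hT) (rot_of_distTriang _ hT₂)
    (Iso.refl _) (Iso.refl _) comm
  have e' := (rotate C).preimageIso e
  exact ⟨N', f', h', hT', ⟨e'⟩, ⟨Triangle.π₁.mapIso e'⟩⟩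
end

section
/- Let X →u Y →v Z →w X⟦1⟧ be a distinguished triangle in C and let M be an object of C. If there exists a morphism g : X → M with w ≫ g⟦1⟧ ≠ 0 (where g⟦1⟧ : X⟦1⟧ → M⟦1⟧ is the shift of g), then the strict inequality dim_k Hom(Y, M⟦1⟧) < dim_k Hom(X, M⟦1⟧) + dim_k Hom(Z, M⟦1⟧) holds. -/
open CategoryTheory CategoryTheory.Limits CategoryTheory.Pretriangulated

/-- For a distinguished triangle `X →u Y →v Z →w X⟦1⟧` and an object `M`,
if there is `g : X ⟶ M` with `w ≫ g⟦1⟧' ≠ 0`, then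
`dim Hom(Y, M⟦1⟧) < dim Hom(X, M⟦1⟧) + dim Hom(Z, M⟦1⟧)`. -/
theorem stmt5 {k : Type*} [Field k] {C : Type*} [Category C] [Preadditive C]
    [CategoryTheory.Linear k C] [HasZeroObject C] [HasShift C ℤ]
    [∀ n : ℤ, (shiftFunctor C n).Additive] [Pretriangulated C]
    [∀ X Y : C, FiniteDimensional k (X ⟶ Y)]
    (X Y Z : C) (u : X ⟶ Y) (v : Y ⟶ Z) (w : Z ⟶ X⟦(1 : ℤ)⟧)
    (hT : Triangle.mk u v w ∈ distTriang C) (M : C)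
    (g : X ⟶ M) (hg : w ≫ g⟦(1 : ℤ)⟧' ≠ 0) :
    Module.finrank k (Y ⟶ M⟦(1 : ℤ)⟧) <
      Module.finrank k (X ⟶ M⟦(1 : ℤ)⟧) + Module.finrank k (Z ⟶ M⟦(1 : ℤ)⟧) := by
  set U := Linear.leftComp k (M⟦(1 : ℤ)⟧) u with hU
  set V := Linear.leftComp k (M⟦(1 : ℤ)⟧) v with hV
  -- ker U ≤ range V
  have hker : LinearMap.ker U ≤ LinearMap.range V := by
    intro f hf
    obtain ⟨h, hh⟩ := Triangle.yoneda_exact₂ _ hT f hf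
    exact ⟨h, hh.symm⟩
  -- v ≫ (w ≫ g⟦1⟧) = 0 and w ≫ g⟦1⟧ ≠ 0, so ker V ≠ ⊥
  have hvz : V (w ≫ g⟦(1 : ℤ)⟧') = 0 := by
    have := comp_distTriang_mor_zero₂₃ _ hT
    simp only [Triangle.mk] at this
    simp [hV, Linear.leftComp, reassoc_of% this]
    exact zero_comp
  have hkerV : 0 < Module.finrank k (LinearMap.ker V) := by
    rw [Module.finrank_pos_iff]
    exact nontrivial_of_ne ⟨_, hvz⟩ 0 (fun h => hg (congrArg Subtype.val h))
  have h1 : Module.finrank k (Y ⟶ M⟦(1 : ℤ)⟧) =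
      Module.finrank k (LinearMap.range U) + Module.finrank k (LinearMap.ker U) :=
    (LinearMap.finrank_range_add_finrank_ker U).symm
  have h2 : Module.finrank k (LinearMap.ker U) ≤ Module.finrank k (LinearMap.range V) :=
    Submodule.finrank_mono hker
  have h3 : Module.finrank k (LinearMap.range V) < Module.finrank k (Z ⟶ M⟦(1 : ℤ)⟧) := by
    have := LinearMap.finrank_range_add_finrank_ker V
    omega
  have h4 : Module.finrank k (LinearMap.range U) ≤ Module.finrank k (X ⟶ M⟦(1 : ℤ)⟧) :=
    (LinearMap.range U).finrank_le
  omega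
end

section
/- Let X →u Y →v Z →w X⟦1⟧ be a distinguished triangle in C. Then dim_k Hom(Y, Y⟦1⟧) ≤ dim_k Hom(X ⊕ Z, (X ⊕ Z)⟦1⟧); equivalently, dim_k Hom(Y, Y⟦1⟧) ≤ dim_k Hom(X, X⟦1⟧) + dim_k Hom(X, Z⟦1⟧) + dim_k Hom(Z, X⟦1⟧) + dim_k Hom(Z, Z⟦1⟧). -/
open CategoryTheory CategoryTheory.Limits CategoryTheory.Pretriangulated

/-- If a two-term sequence of linear maps is "exact at the middle" in the weak sense that
every element of the kernel of `g` lies in the range of `f`, then the dimension of the middle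
space is bounded by the sum of the dimensions of the outer spaces. -/
lemma middle_finrank_le {k A B C : Type*} [Field k]
    [AddCommGroup A] [Module k A] [AddCommGroup B] [Module k B]
    [AddCommGroup C] [Module k C] [FiniteDimensional k A]
    [FiniteDimensional k B] [FiniteDimensional k C]
    (f : A →ₗ[k] B) (g : B →ₗ[k] C)
    (h : ∀ b, g b = 0 → ∃ a, f a = b) :
    Module.finrank k B ≤ Module.finrank k A + Module.finrank k C := by
  have h1 : LinearMap.ker g ≤ LinearMap.range f := fun b hb => h b hb
  have h2 : Module.finrank k (LinearMap.ker g) ≤ Module.finrank k A :=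
    le_trans (Submodule.finrank_mono h1) (LinearMap.finrank_range_le f)
  have h3 : Module.finrank k (LinearMap.range g) ≤ Module.finrank k C :=
    (LinearMap.range g).finrank_le
  have h4 := LinearMap.finrank_range_add_finrank_ker g
  omega

/-- Decomposing a hom out of a binary biproduct, as a linear equivalence. -/
@[simps]
noncomputable def homBiprodLeftEquiv (k : Type*) {C : Type*} [Field k] [Category C] [Preadditive C]
    [CategoryTheory.Linear k C] [HasBinaryBiproducts C] (X Z W : C) :
    (X ⊞ Z ⟶ W) ≃ₗ[k] (X ⟶ W) × (Z ⟶ W) where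
  toFun f := (biprod.inl ≫ f, biprod.inr ≫ f)
  map_add' f g := by simp
  map_smul' r f := by simp
  invFun p := biprod.desc p.1 p.2
  left_inv f := by apply biprod.hom_ext' <;> simp
  right_inv p := by simp

/-- Decomposing a hom into a binary biproduct, as a linear equivalence. -/
@[simps]
noncomputable def homBiprodRightEquiv (k : Type*) {C : Type*} [Field k] [Category C] [Preadditive C]
    [CategoryTheory.Linear k C] [HasBinaryBiproducts C] (A X Z : C) :
    (A ⟶ X ⊞ Z) ≃ₗ[k] (A ⟶ X) × (A ⟶ Z) where
  toFun f := (f ≫ biprod.fst, f ≫ biprod.snd)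
  map_add' f g := by simp
  map_smul' r f := by simp
  invFun p := biprod.lift p.1 p.2
  left_inv f := by apply biprod.hom_ext <;> simp
  right_inv p := by simp

/-- For a distinguished triangle `X →u Y →v Z →w X⟦1⟧`,
`dim Hom(Y, Y⟦1⟧) ≤ dim Hom(X ⊞ Z, (X ⊞ Z)⟦1⟧)`; equivalently,
`dim Hom(Y, Y⟦1⟧) ≤ dim Hom(X, X⟦1⟧) + dim Hom(X, Z⟦1⟧) + dim Hom(Z, X⟦1⟧)
  + dim Hom(Z, Z⟦1⟧)`. -/
theorem stmt6 {k : Type*} [Field k] {C : Type*} [Category C] [Preadditive C]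
    [CategoryTheory.Linear k C] [HasZeroObject C] [HasShift C ℤ]
    [∀ n : ℤ, (shiftFunctor C n).Additive] [Pretriangulated C]
    [HasBinaryBiproducts C]
    [∀ X Y : C, FiniteDimensional k (X ⟶ Y)]
    (X Y Z : C) (u : X ⟶ Y) (v : Y ⟶ Z) (w : Z ⟶ X⟦(1 : ℤ)⟧)
    (hT : Triangle.mk u v w ∈ distTriang C) :
    Module.finrank k (Y ⟶ Y⟦(1 : ℤ)⟧) ≤
        Module.finrank k (X ⊞ Z ⟶ (X ⊞ Z)⟦(1 : ℤ)⟧) ∧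
    Module.finrank k (Y ⟶ Y⟦(1 : ℤ)⟧) ≤
        Module.finrank k (X ⟶ X⟦(1 : ℤ)⟧) + Module.finrank k (X ⟶ Z⟦(1 : ℤ)⟧) +
        Module.finrank k (Z ⟶ X⟦(1 : ℤ)⟧) + Module.finrank k (Z ⟶ Z⟦(1 : ℤ)⟧) := by
  set T := Triangle.mk u v w with hTdef
  -- Step 1: Hom(Z,Y⟦1⟧) → Hom(Y,Y⟦1⟧) → Hom(X,Y⟦1⟧) (contravariant) gives
  have step1 : Module.finrank k (Y ⟶ Y⟦(1 : ℤ)⟧) ≤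
      Module.finrank k (Z ⟶ Y⟦(1 : ℤ)⟧) + Module.finrank k (X ⟶ Y⟦(1 : ℤ)⟧) := by
    refine middle_finrank_le (Linear.leftComp k (Y⟦(1 : ℤ)⟧) v)
      (Linear.leftComp k (Y⟦(1 : ℤ)⟧) u) ?_
    intro f hf
    obtain ⟨g, hg⟩ := Triangle.yoneda_exact₂ T hT f hf
    exact ⟨g, hg.symm⟩
  -- covariant step: for any A, Hom(A,X⟦1⟧) → Hom(A,Y⟦1⟧) → Hom(A,Z⟦1⟧)
  have step2 : ∀ A : C, Module.finrank k (A ⟶ Y⟦(1 : ℤ)⟧) ≤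
      Module.finrank k (A ⟶ X⟦(1 : ℤ)⟧) + Module.finrank k (A ⟶ Z⟦(1 : ℤ)⟧) := by
    intro A
    refine middle_finrank_le (Linear.rightComp k A (u⟦(1 : ℤ)⟧'))
      (Linear.rightComp k A (v⟦(1 : ℤ)⟧')) ?_
    intro f hf
    have hrot := rot_of_distTriang T hT
    obtain ⟨g, hg⟩ := Triangle.coyoneda_exact₁ T.rotate hrot f (by exact hf)
    refine ⟨-g, ?_⟩
    have : T.rotate.mor₃ = -u⟦(1 : ℤ)⟧' := rfl
    show (-g : A ⟶ X⟦(1 : ℤ)⟧) ≫ u⟦(1 : ℤ)⟧' = f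
    rw [hg, this]
    exact (Preadditive.neg_comp _ _).trans (Preadditive.comp_neg _ _).symm
  constructor
  · -- dim of biproduct hom equals the sum of the four
    haveI : PreservesBinaryBiproducts (shiftFunctor C (1 : ℤ)) :=
      preservesBinaryBiproducts_of_preservesBiproducts _
    have e : (X ⊞ Z ⟶ (X ⊞ Z)⟦(1 : ℤ)⟧) ≃ₗ[k]
        ((X ⟶ X⟦(1 : ℤ)⟧) × (X ⟶ Z⟦(1 : ℤ)⟧)) × ((Z ⟶ X⟦(1 : ℤ)⟧) × (Z ⟶ Z⟦(1 : ℤ)⟧)) :=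
      (Linear.homCongr k (Iso.refl _) ((shiftFunctor C (1 : ℤ)).mapBiprod X Z)).trans
        ((homBiprodLeftEquiv k X Z _).trans
          ((homBiprodRightEquiv k X _ _).prodCongr (homBiprodRightEquiv k Z _ _)))
    have he := e.finrank_eq
    rw [he, Module.finrank_prod, Module.finrank_prod, Module.finrank_prod]
    have := step1
    have h2 := step2 X
    have h3 := step2 Z
    omega
  · have h2 := step2 X
    have h3 := step2 Z
    omega
end

section
/- Let X →u Y →v Z →w X⟦1⟧ be a distinguished triangle in C. Then the following are equivalent: (i) dim_k Hom(Y, Y⟦1⟧) = dim_k Hom(X ⊕ Z, (X ⊕ Z)⟦1⟧); (ii) w = 0 (the triangle is split); (iii) Y ≅ X ⊕ Z. -/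
open CategoryTheory CategoryTheory.Limits CategoryTheory.Pretriangulated

section Aux

variable {k : Type*} [Field k]

/-- rank-nullity bound for an exact pair of linear maps. -/
lemma aux_finrank_le_of_exact {M N P : Type*}
    [AddCommGroup M] [Module k M] [AddCommGroup N] [Module k N] [AddCommGroup P] [Module k P]
    [FiniteDimensional k M] [FiniteDimensional k N] [FiniteDimensional k P]
    (f : M →ₗ[k] N) (g : N →ₗ[k] P) (h : LinearMap.range f = LinearMap.ker g) :
    Module.finrank k N ≤ Module.finrank k M + Module.finrank k P := by
  have h1 := LinearMap.finrank_range_add_finrank_ker g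
  have h2 : Module.finrank k (LinearMap.ker g) = Module.finrank k (LinearMap.range f) := by
    rw [h]
  have h3 := LinearMap.finrank_range_le f
  have h4 : Module.finrank k (LinearMap.range g) ≤ Module.finrank k P :=
    Submodule.finrank_le _
  omega

/-- In an exact pair, if the middle dimension is maximal, the first map is injective. -/
lemma aux_injective_of_exact_of_finrank_eq {M N P : Type*}
    [AddCommGroup M] [Module k M] [AddCommGroup N] [Module k N] [AddCommGroup P] [Module k P]
    [FiniteDimensional k M] [FiniteDimensional k N] [FiniteDimensional k P]
    (f : M →ₗ[k] N) (g : N →ₗ[k] P) (h : LinearMap.range f = LinearMap.ker g)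
    (heq : Module.finrank k N = Module.finrank k M + Module.finrank k P) :
    Function.Injective f := by
  have h1 := LinearMap.finrank_range_add_finrank_ker g
  have h2 : Module.finrank k (LinearMap.ker g) = Module.finrank k (LinearMap.range f) := by
    rw [h]
  have h3 : Module.finrank k (LinearMap.range g) ≤ Module.finrank k P :=
    Submodule.finrank_le _
  have h4 := LinearMap.finrank_range_add_finrank_ker f
  have h5 := LinearMap.finrank_range_le f
  have h6 : Module.finrank k (LinearMap.ker f) = 0 := by omega
  rw [← LinearMap.ker_eq_bot]
  exact Submodule.finrank_eq_zero.mp h6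

variable {C : Type*} [Category C] [Preadditive C] [CategoryTheory.Linear k C]
  [HasBinaryBiproducts C]

/-- Homs out of a binary biproduct decompose as a product. -/
noncomputable def auxHomFromBiprod (P Q B : C) : (P ⊞ Q ⟶ B) ≃ₗ[k] (P ⟶ B) × (Q ⟶ B) where
  toFun f := (biprod.inl ≫ f, biprod.inr ≫ f)
  invFun p := biprod.desc p.1 p.2
  map_add' f g := by simp [Prod.ext_iff]
  map_smul' r f := by simp [Prod.ext_iff]
  left_inv f := by apply biprod.hom_ext' <;> simp
  right_inv p := by simp

/-- Homs into a binary biproduct decompose as a product. -/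
noncomputable def auxHomToBiprod (A P Q : C) : (A ⟶ P ⊞ Q) ≃ₗ[k] (A ⟶ P) × (A ⟶ Q) where
  toFun f := (f ≫ biprod.fst, f ≫ biprod.snd)
  invFun p := biprod.lift p.1 p.2
  map_add' f g := by simp [Prod.ext_iff]
  map_smul' r f := by simp [Prod.ext_iff]
  left_inv f := by apply biprod.hom_ext <;> simp
  right_inv p := by simp

/-- An additive functor sends binary biproducts to binary biproducts. -/
noncomputable def auxMapBiprodIso (F : C ⥤ C) [F.Additive] (P Q : C) :
    F.obj (P ⊞ Q) ≅ F.obj P ⊞ F.obj Q where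
  hom := biprod.lift (F.map biprod.fst) (F.map biprod.snd)
  inv := biprod.desc (F.map biprod.inl) (F.map biprod.inr)
  hom_inv_id := by
    rw [biprod.lift_desc, ← F.map_comp, ← F.map_comp, ← F.map_add, biprod.total, F.map_id]
  inv_hom_id := by
    apply biprod.hom_ext' <;> apply biprod.hom_ext <;>
      simp [← F.map_comp]

end Aux

/-- For a distinguished triangle `X →u Y →v Z →w X⟦1⟧`, the following are
equivalent: (i) `dim Hom(Y, Y⟦1⟧) = dim Hom(X ⊞ Z, (X ⊞ Z)⟦1⟧)`; (ii) `w = 0`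
(the triangle is split); (iii) `Y ≅ X ⊞ Z`. -/
theorem stmt7 {k : Type*} [Field k] {C : Type*} [Category C] [Preadditive C]
    [CategoryTheory.Linear k C] [HasZeroObject C] [HasShift C ℤ]
    [∀ n : ℤ, (shiftFunctor C n).Additive] [Pretriangulated C]
    [HasBinaryBiproducts C]
    [∀ X Y : C, FiniteDimensional k (X ⟶ Y)]
    (X Y Z : C) (u : X ⟶ Y) (v : Y ⟶ Z) (w : Z ⟶ X⟦(1 : ℤ)⟧)
    (hT : Triangle.mk u v w ∈ distTriang C) :
    List.TFAE
      [Module.finrank k (Y ⟶ Y⟦(1 : ℤ)⟧) =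
          Module.finrank k (X ⊞ Z ⟶ (X ⊞ Z)⟦(1 : ℤ)⟧),
       w = 0,
       Nonempty (Y ≅ X ⊞ Z)] := by
  tfae_have 2 → 3 := by
    intro hw
    obtain ⟨s, hs⟩ := Triangle.coyoneda_exact₃ _ hT (𝟙 Z)
      (by simp only [Triangle.mk_mor₃, hw]; exact Limits.comp_zero)
    have huv : u ≫ v = 0 := comp_distTriang_mor_zero₁₂ _ hT
    let φ : binaryBiproductTriangle X Z ⟶ Triangle.mk u v w :=
      Triangle.homMk _ _ (𝟙 X) (biprod.desc u s) (𝟙 Z)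
        (by exact (biprod.inl_desc u s).trans (Category.id_comp u).symm) 
        (by
          apply biprod.hom_ext'
          · exact ((congrArg (biprod.inl ≫ ·) (Category.comp_id _)).trans biprod.inl_snd).trans
              (((Category.assoc _ _ _).symm.trans (congrArg (· ≫ v) (biprod.inl_desc u s))).trans huv).symm
          · exact ((congrArg (biprod.inr ≫ ·) (Category.comp_id _)).trans biprod.inr_snd).trans
              (hs.trans ((congrArg (· ≫ v) (biprod.inr_desc u s)).symm.trans (Category.assoc _ _ _))))
        (by exact (Limits.zero_comp).trans ((Category.id_comp _).trans hw).symm)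
    have : IsIso φ.hom₂ :=
      isIso₂_of_isIso₁₃ φ (binaryBiproductTriangle_distinguished X Z) hT
        (by exact inferInstanceAs (IsIso (𝟙 X))) (by exact inferInstanceAs (IsIso (𝟙 Z)))
    exact ⟨(asIso φ.hom₂).symm⟩
  tfae_have 3 → 1 := by
    rintro ⟨e⟩
    exact (Linear.homCongr k e ((shiftFunctor C (1 : ℤ)).mapIso e)).finrank_eq
  tfae_have 1 → 2 := by
    intro h1
    set T := Triangle.mk u v w with hTdef
    have huv : u ≫ v = 0 := comp_distTriang_mor_zero₁₂ _ hT
    have huv1 : (shiftFunctor C (1 : ℤ)).map u ≫ (shiftFunctor C (1 : ℤ)).map v = 0 := by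
      rw [← Functor.map_comp, huv, Functor.map_zero]
    -- notation for dimensions
    let d : C → C → ℕ := fun A B => Module.finrank k (A ⟶ B)
    -- contravariant exact sequence at Hom(-, Y⟦1⟧)
    have hexact1 :
        LinearMap.range (Linear.leftComp k (Y⟦(1 : ℤ)⟧) v) =
          LinearMap.ker (Linear.leftComp k (Y⟦(1 : ℤ)⟧) u) := by
      apply le_antisymm
      · rintro f ⟨g, rfl⟩
        simp only [LinearMap.mem_ker, Linear.leftComp_apply]
        rw [← Category.assoc, huv, Limits.zero_comp]
      · intro f hf
        obtain ⟨g, hg⟩ := Triangle.yoneda_exact₂ T hT f hf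
        exact ⟨g, hg.symm⟩
    -- covariant exact sequences at Hom(A, -⟦1⟧)
    have hexact2 : ∀ A : C,
        LinearMap.range (Linear.rightComp k A ((shiftFunctor C (1 : ℤ)).map u)) =
          LinearMap.ker (Linear.rightComp k A ((shiftFunctor C (1 : ℤ)).map v)) := by
      intro A
      apply le_antisymm
      · rintro f ⟨g, rfl⟩
        simp only [LinearMap.mem_ker, Linear.rightComp_apply]
        rw [Category.assoc, huv1, Limits.comp_zero]
      · intro f hf
        obtain ⟨g, hg⟩ := Triangle.coyoneda_exact₁ T.rotate (rot_of_distTriang T hT) f hf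
        refine ⟨-g, ?_⟩
        exact (Preadditive.neg_comp _ _).trans ((Preadditive.comp_neg _ _).symm.trans hg.symm)
    -- dimension bounds
    have hb1 : d Y (Y⟦(1 : ℤ)⟧) ≤ d Z (Y⟦(1 : ℤ)⟧) + d X (Y⟦(1 : ℤ)⟧) :=
      aux_finrank_le_of_exact _ _ hexact1
    have hb2 : ∀ A : C, d A (Y⟦(1 : ℤ)⟧) ≤ d A (X⟦(1 : ℤ)⟧) + d A (Z⟦(1 : ℤ)⟧) := fun A =>
      aux_finrank_le_of_exact _ _ (hexact2 A)
    -- computation of the right-hand side dimension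
    have hRHS : d (X ⊞ Z) ((X ⊞ Z)⟦(1 : ℤ)⟧) =
        (d X (X⟦(1 : ℤ)⟧) + d Z (X⟦(1 : ℤ)⟧)) + (d X (Z⟦(1 : ℤ)⟧) + d Z (Z⟦(1 : ℤ)⟧)) := by
      have e0 : (X ⊞ Z ⟶ (X ⊞ Z)⟦(1 : ℤ)⟧) ≃ₗ[k] (X ⊞ Z ⟶ X⟦(1 : ℤ)⟧ ⊞ Z⟦(1 : ℤ)⟧) :=
        Linear.homCongr k (Iso.refl _) (auxMapBiprodIso (shiftFunctor C (1 : ℤ)) X Z)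
      have e1 := (auxHomToBiprod (k := k) (X ⊞ Z) (X⟦(1 : ℤ)⟧) (Z⟦(1 : ℤ)⟧))
      have e2 := (auxHomFromBiprod (k := k) X Z (X⟦(1 : ℤ)⟧))
      have e3 := (auxHomFromBiprod (k := k) X Z (Z⟦(1 : ℤ)⟧))
      calc d (X ⊞ Z) ((X ⊞ Z)⟦(1 : ℤ)⟧)
          = Module.finrank k (((X ⟶ X⟦(1 : ℤ)⟧) × (Z ⟶ X⟦(1 : ℤ)⟧)) ×
              ((X ⟶ Z⟦(1 : ℤ)⟧) × (Z ⟶ Z⟦(1 : ℤ)⟧))) :=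
            (e0.trans (e1.trans (e2.prodCongr e3))).finrank_eq
        _ = _ := by
            rw [Module.finrank_prod, Module.finrank_prod, Module.finrank_prod]
    -- forcing equality in the third exact sequence
    have key : d Z (Y⟦(1 : ℤ)⟧) = d Z (X⟦(1 : ℤ)⟧) + d Z (Z⟦(1 : ℤ)⟧) := by
      have := hb2 X
      have := hb2 Z
      have h1' : d Y (Y⟦(1 : ℤ)⟧) =
          (d X (X⟦(1 : ℤ)⟧) + d Z (X⟦(1 : ℤ)⟧)) + (d X (Z⟦(1 : ℤ)⟧) + d Z (Z⟦(1 : ℤ)⟧)) :=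
        h1.trans hRHS
      omega
    have hinj : Function.Injective (Linear.rightComp k Z ((shiftFunctor C (1 : ℤ)).map u)) :=
      aux_injective_of_exact_of_finrank_eq _ _ (hexact2 Z) key
    have hwu : w ≫ (shiftFunctor C (1 : ℤ)).map u = 0 := comp_distTriang_mor_zero₃₁ T hT
    have : (Linear.rightComp k Z ((shiftFunctor C (1 : ℤ)).map u)) w =
        (Linear.rightComp k Z ((shiftFunctor C (1 : ℤ)).map u)) 0 := by
      simp only [Linear.rightComp_apply, map_zero]
      rw [hwu]
    exact hinj this
  tfae_finish
end

section
/- Let k be a finite field, A a finite-dimensional k-algebra, and let M and N be finite-dimensional A-modules having no common direct summand, i.e. no nonzero A-module is isomorphic both to a direct summand of M and to a direct summand of N. Then the (finite) cardinalities satisfy |Aut_A(M ⊕ N)| = |Aut_A(M)| · |Aut_A(N)| · |Hom_A(M, N)| · |Hom_A(N, M)|, where Aut_A denotes the group of A-module automorphisms and Hom_A the space of A-module homomorphisms. -/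
universe u

open Module LinearMap

section shear

variable {R : Type*} [Ring R] {M N : Type*} [AddCommGroup M] [AddCommGroup N]
  [Module R M] [Module R N]

/-- The shear `(x, y) ↦ (x, y + f x)`. -/
def shearU (f : M →ₗ[R] N) : (M × N) ≃ₗ[R] (M × N) :=
  LinearEquiv.ofLinear
    ((LinearMap.fst R M N).prod (LinearMap.snd R M N + f ∘ₗ LinearMap.fst R M N))
    ((LinearMap.fst R M N).prod (LinearMap.snd R M N - f ∘ₗ LinearMap.fst R M N))
    (by ext p <;> simp) (by ext p <;> simp)

@[simp] lemma shearU_apply (f : M →ₗ[R] N) (p : M × N) :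
    shearU f p = (p.1, p.2 + f p.1) := rfl

@[simp] lemma shearU_symm_apply (f : M →ₗ[R] N) (p : M × N) :
    (shearU f).symm p = (p.1, p.2 - f p.1) := rfl

/-- The shear `(x, y) ↦ (x + g y, y)`. -/
def shearL (g : N →ₗ[R] M) : (M × N) ≃ₗ[R] (M × N) :=
  LinearEquiv.ofLinear
    ((LinearMap.fst R M N + g ∘ₗ LinearMap.snd R M N).prod (LinearMap.snd R M N))
    ((LinearMap.fst R M N - g ∘ₗ LinearMap.snd R M N).prod (LinearMap.snd R M N))
    (by ext p <;> simp) (by ext p <;> simp)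

@[simp] lemma shearL_apply (g : N →ₗ[R] M) (p : M × N) :
    shearL g p = (p.1 + g p.2, p.2) := rfl

@[simp] lemma shearL_symm_apply (g : N →ₗ[R] M) (p : M × N) :
    (shearL g).symm p = (p.1 - g p.2, p.2) := rfl

end shear

section nilp

variable {k : Type*} [Field k] {A : Type*} [Ring A] [Algebra k A]

/-- If `M` and `N` have no common direct summand, then any composition
`M → N → M` is nilpotent. -/
lemma nilp_comp {M N : Type u}
    [AddCommGroup M] [Module A M] [Module k M] [IsScalarTower k A M] [FiniteDimensional k M]
    [AddCommGroup N] [Module A N]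
    (hcommon : ∀ (P : Type u) [AddCommGroup P] [Module A P],
      (∃ (i : P →ₗ[A] M) (r : M →ₗ[A] P), r ∘ₗ i = LinearMap.id) →
      (∃ (i : P →ₗ[A] N) (r : N →ₗ[A] P), r ∘ₗ i = LinearMap.id) →
      Subsingleton P)
    (f : M →ₗ[A] N) (g : N →ₗ[A] M) : IsNilpotent (g ∘ₗ f : Module.End A M) := by
  set e : Module.End A M := g ∘ₗ f with he
  -- the ranges of the powers of `e` form a decreasing chain
  have hchain : Antitone fun m => LinearMap.range (e ^ m) := by
    apply antitone_nat_of_succ_le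
    intro m
    rw [pow_succ]
    exact LinearMap.range_comp_le_range e (e ^ m)
  -- the chain of (k-)finrank stabilizes
  set rk : ℕ → ℕ := fun m =>
    finrank k ((LinearMap.range (e ^ m)).restrictScalars k) with hrk
  have hrkmono : ∀ {m m' : ℕ}, m ≤ m' → rk m' ≤ rk m := by
    intro m m' h
    exact Submodule.finrank_mono (fun x hx => hchain h hx)
  obtain ⟨n₀, hn₀⟩ : ∃ n₀, rk n₀ = sInf (Set.range rk) :=
    Nat.sInf_mem (Set.range_nonempty rk)
  set n : ℕ := n₀ + 1 with hn
  have hstab : ∀ m, n ≤ m → LinearMap.range (e ^ m) = LinearMap.range (e ^ n) := by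
    intro m hm
    have h1 : (LinearMap.range (e ^ m)).restrictScalars k ≤
        (LinearMap.range (e ^ n)).restrictScalars k := fun x hx => hchain hm hx
    have h2 : rk n ≤ rk m := by
      have : sInf (Set.range rk) ≤ rk m := Nat.sInf_le ⟨m, rfl⟩
      have h3 : rk n ≤ rk n₀ := hrkmono (Nat.le_succ n₀)
      omega
    exact Submodule.restrictScalars_injective k A M
      (Submodule.eq_of_le_of_finrank_le h1 h2)
  -- `I` is the "stable image" of `e`
  have hsucc : ∀ (m : ℕ) (x : M), (e ^ (m + 1)) x = e ((e ^ m) x) := by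
    intro m x
    rw [pow_succ']
    rfl
  set I : Submodule A M := LinearMap.range (e ^ n) with hI
  have hmapsTo : ∀ x ∈ I, e x ∈ I := by
    rintro x ⟨y, rfl⟩
    have h1 : e ((e ^ n) y) ∈ LinearMap.range (e ^ (n + 1)) := ⟨y, hsucc n y⟩
    rw [hstab (n + 1) (Nat.le_succ n)] at h1
    exact h1
  set EI : ↥I →ₗ[A] ↥I := e.restrict hmapsTo with hEI
  have hEIsurj : Function.Surjective EI := by
    rintro ⟨z, hz⟩
    have hz' : z ∈ LinearMap.range (e ^ (n + 1)) := by
      rw [hstab (n + 1) (Nat.le_succ n)]; exact hz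
    obtain ⟨y, hy⟩ := hz'
    refine ⟨⟨(e ^ n) y, ⟨y, rfl⟩⟩, ?_⟩
    apply Subtype.ext
    show e ((e ^ n) y) = z
    rw [← hsucc n y, hy]
  haveI : FiniteDimensional k ↥I :=
    inferInstanceAs (FiniteDimensional k (I.restrictScalars k))
  have hEIinj : Function.Injective EI := by
    have := (LinearMap.injective_iff_surjective (f := EI.restrictScalars k)).mpr
      (by exact hEIsurj)
    exact this
  set EIe : ↥I ≃ₗ[A] ↥I := LinearEquiv.ofBijective EI ⟨hEIinj, hEIsurj⟩ with hEIe
  have hpow : ∀ (m : ℕ) (x : ↥I), (((EIe ^ m) x : ↥I) : M) = (e ^ m) (x : M) := by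
    intro m
    induction m with
    | zero => intro x; simp
    | succ m ih =>
      intro x
      rw [pow_succ, pow_succ]
      have h1 : (EIe ^ m * EIe) x = (EIe ^ m) (EIe x) := rfl
      rw [h1, ih]
      have h2 : ((EIe x : ↥I) : M) = e (x : M) := rfl
      rw [h2]
      rfl
  -- `I` is a direct summand of `M`
  have hsplitM : ∃ (i : ↥I →ₗ[A] M) (r : M →ₗ[A] ↥I), r ∘ₗ i = LinearMap.id := by
    refine ⟨I.subtype, (EIe ^ n).symm.toLinearMap ∘ₗ (e ^ n).rangeRestrict, ?_⟩
    ext x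
    have h1 : (e ^ n).rangeRestrict (x : M) = (EIe ^ n) x :=
      Subtype.ext (by rw [hpow]; rfl)
    show (((EIe ^ n).symm ((e ^ n).rangeRestrict (x : M)) : ↥I) : M) = ((x : ↥I) : M)
    rw [h1, LinearEquiv.symm_apply_apply]
  -- `I` is a direct summand of `N`
  have hsplitN : ∃ (i : ↥I →ₗ[A] N) (r : N →ₗ[A] ↥I), r ∘ₗ i = LinearMap.id := by
    have hmem : ∀ y : N, ((e ^ n) ∘ₗ g) y ∈ I := fun y => ⟨g y, rfl⟩
    refine ⟨f ∘ₗ I.subtype,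
      (EIe ^ (n + 1)).symm.toLinearMap ∘ₗ LinearMap.codRestrict I ((e ^ n) ∘ₗ g) hmem, ?_⟩
    ext x
    have h1 : LinearMap.codRestrict I ((e ^ n) ∘ₗ g) hmem (f (x : M)) = (EIe ^ (n + 1)) x := by
      apply Subtype.ext
      rw [hpow]
      show (e ^ n) (g (f (x : M))) = (e ^ (n + 1)) (x : M)
      rw [pow_succ]
      rfl
    show (((EIe ^ (n + 1)).symm
        (LinearMap.codRestrict I ((e ^ n) ∘ₗ g) hmem (f (x : M))) : ↥I) : M) = ((x : ↥I) : M)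
    rw [h1, LinearEquiv.symm_apply_apply]
  haveI hsub : Subsingleton ↥I := hcommon ↥I hsplitM hsplitN
  refine ⟨n, ?_⟩
  rw [← LinearMap.range_eq_bot, ← hI]
  exact Submodule.eq_bot_of_subsingleton

end nilp

/-- Let `k` be a finite field, `A` a finite-dimensional `k`-algebra, and let
`M`, `N` be finite-dimensional `A`-modules with no common direct summand (every `A`-module
that is a direct summand of both `M` and `N` is zero). Then
`|Aut_A(M ⊕ N)| = |Aut_A M| * |Aut_A N| * |Hom_A(M, N)| * |Hom_A(N, M)|`. -/
theorem stmt12 {k : Type*} [Field k] [Fintype k]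
    {A : Type*} [Ring A] [Algebra k A] [FiniteDimensional k A]
    {M N : Type u}
    [AddCommGroup M] [Module A M] [Module k M] [IsScalarTower k A M] [FiniteDimensional k M]
    [AddCommGroup N] [Module A N] [Module k N] [IsScalarTower k A N] [FiniteDimensional k N]
    (hcommon : ∀ (P : Type u) [AddCommGroup P] [Module A P],
      (∃ (i : P →ₗ[A] M) (r : M →ₗ[A] P), r ∘ₗ i = LinearMap.id) →
      (∃ (i : P →ₗ[A] N) (r : N →ₗ[A] P), r ∘ₗ i = LinearMap.id) →
      Subsingleton P) :
    Nat.card ((M × N) ≃ₗ[A] (M × N)) =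
      Nat.card (M ≃ₗ[A] M) * Nat.card (N ≃ₗ[A] N) *
        (Nat.card (M →ₗ[A] N) * Nat.card (N →ₗ[A] M)) := by
  classical
  -- nilpotency of compositions `N → M → N`
  have hnilpN : ∀ (b : N →ₗ[A] M) (c : M →ₗ[A] N),
      IsNilpotent (c ∘ₗ b : Module.End A N) := by
    intro b c
    refine nilp_comp (k := k) ?_ b c
    intro P _ _ h1 h2
    exact hcommon P h2 h1
  -- the decomposition map
  set Φ : ((M ≃ₗ[A] M) × (N ≃ₗ[A] N)) × ((M →ₗ[A] N) × (N →ₗ[A] M)) →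
      ((M × N) ≃ₗ[A] (M × N)) :=
    fun p => (shearU p.2.1) ≪≫ₗ (LinearEquiv.prodCongr p.1.1 p.1.2) ≪≫ₗ (shearL p.2.2) with hΦ
  have hΦ_apply : ∀ (α : M ≃ₗ[A] M) (β : N ≃ₗ[A] N) (f : M →ₗ[A] N) (g : N →ₗ[A] M)
      (q : M × N), Φ ((α, β), (f, g)) q = (α q.1 + g (β (q.2 + f q.1)), β (q.2 + f q.1)) := by
    intro α β f g q
    rfl
  have hΦinj : Function.Injective Φ := by
    rintro ⟨⟨α, β⟩, f, g⟩ ⟨⟨α', β'⟩, f', g'⟩ h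
    have happ : ∀ q, Φ ((α, β), (f, g)) q = Φ ((α', β'), (f', g')) q := fun q => by rw [h]
    have hβ : β = β' := by
      apply LinearEquiv.ext; intro y
      have h2 := congrArg Prod.snd (happ (0, y))
      simpa [hΦ_apply] using h2
    subst hβ
    have hf : f = f' := by
      apply LinearMap.ext; intro x
      have h2 := congrArg Prod.snd (happ (x, 0))
      simp only [hΦ_apply, zero_add] at h2
      exact β.injective h2
    subst hf
    have hg : g = g' := by
      apply LinearMap.ext; intro y
      have h2 := congrArg Prod.fst (happ (0, β.symm y))
      simp only [hΦ_apply, map_zero, add_zero, zero_add, map_zero,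
        LinearEquiv.apply_symm_apply] at h2
      simpa using h2
    subst hg
    have hα : α = α' := by
      apply LinearEquiv.ext; intro x
      have h2 := congrArg Prod.fst (happ (x, 0))
      simp only [hΦ_apply, zero_add, add_left_inj] at h2
      exact h2
    subst hα
    rfl
  have hΦsurj : Function.Surjective Φ := by
    intro φ
    set φL : (M × N) →ₗ[A] (M × N) := φ.toLinearMap with hφL
    set ψL : (M × N) →ₗ[A] (M × N) := φ.symm.toLinearMap with hψL
    set a : M →ₗ[A] M := (LinearMap.fst A M N) ∘ₗ φL ∘ₗ (LinearMap.inl A M N) with ha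
    set b : N →ₗ[A] M := (LinearMap.fst A M N) ∘ₗ φL ∘ₗ (LinearMap.inr A M N) with hb
    set c : M →ₗ[A] N := (LinearMap.snd A M N) ∘ₗ φL ∘ₗ (LinearMap.inl A M N) with hc
    set d : N →ₗ[A] N := (LinearMap.snd A M N) ∘ₗ φL ∘ₗ (LinearMap.inr A M N) with hd
    set b' : N →ₗ[A] M := (LinearMap.fst A M N) ∘ₗ ψL ∘ₗ (LinearMap.inr A M N) with hb'
    set c' : M →ₗ[A] N := (LinearMap.snd A M N) ∘ₗ ψL ∘ₗ (LinearMap.inl A M N) with hc'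
    have hφ_app : ∀ p : M × N, φ p = (a p.1 + b p.2, c p.1 + d p.2) := by
      intro p
      have h1 : φ p = φ (p.1, 0) + φ (0, p.2) := by
        rw [← map_add, Prod.mk_add_mk, add_zero, zero_add]
      rw [h1]
      rfl
    set a' : M →ₗ[A] M := (LinearMap.fst A M N) ∘ₗ ψL ∘ₗ (LinearMap.inl A M N) with ha'
    set d' : N →ₗ[A] N := (LinearMap.snd A M N) ∘ₗ ψL ∘ₗ (LinearMap.inr A M N) with hd'
    have hψ_app : ∀ p : M × N, φ.symm p = (a' p.1 + b' p.2, c' p.1 + d' p.2) := by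
      intro p
      have h1 : φ.symm p = φ.symm (p.1, 0) + φ.symm (0, p.2) := by
        rw [← map_add, Prod.mk_add_mk, add_zero, zero_add]
      rw [h1]
      rfl
    -- `d` is bijective
    have hdd' : (d ∘ₗ d' : Module.End A N) = LinearMap.id - (c ∘ₗ b') := by
      apply LinearMap.ext; intro y
      have h0 : φ (φ.symm (0, y)) = ((0 : M), y) := φ.apply_symm_apply (0, y)
      rw [hψ_app (0, y)] at h0
      simp only [map_zero, zero_add] at h0
      rw [hφ_app (b' y, d' y)] at h0
      have h2 := congrArg Prod.snd h0
      simp only at h2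
      -- h2 : c (b' y) + d (d' y) = y
      show d (d' y) = y - c (b' y)
      exact eq_sub_of_add_eq' h2
    have hd'd : (d' ∘ₗ d : Module.End A N) = LinearMap.id - (c' ∘ₗ b) := by
      apply LinearMap.ext; intro y
      have h0 : φ.symm (φ ((0 : M), y)) = ((0 : M), y) := φ.symm_apply_apply (0, y)
      rw [hφ_app (0, y)] at h0
      simp only [map_zero, zero_add] at h0
      rw [hψ_app (b y, d y)] at h0
      have h2 := congrArg Prod.snd h0
      simp only at h2
      show d' (d y) = y - c' (b y)
      exact eq_sub_of_add_eq' h2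
    have hone : (LinearMap.id : Module.End A N) = 1 := rfl
    have hu1 : IsUnit (d ∘ₗ d' : Module.End A N) := by
      rw [hdd', hone]
      exact (hnilpN b' c).isUnit_one_sub
    have hu2 : IsUnit (d' ∘ₗ d : Module.End A N) := by
      rw [hd'd, hone]
      exact (hnilpN b c').isUnit_one_sub
    have hbij1 := (Module.End.isUnit_iff (d ∘ₗ d' : Module.End A N)).mp hu1
    have hbij2 := (Module.End.isUnit_iff (d' ∘ₗ d : Module.End A N)).mp hu2
    have hdbij : Function.Bijective d := by
      constructor
      · intro y y' hyy
        exact hbij2.1 (show (d' ∘ₗ d) y = (d' ∘ₗ d) y' from congrArg d' hyy)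
      · intro y
        obtain ⟨z, hz⟩ := hbij1.2 y
        exact ⟨d' z, hz⟩
    set β : N ≃ₗ[A] N := LinearEquiv.ofBijective d hdbij with hβ
    have hdf : ∀ y, d (β.symm y) = y := fun y => β.apply_symm_apply y
    have hsd : ∀ y, β.symm (d y) = y := fun y => β.symm_apply_apply y
    set f₀ : M →ₗ[A] N := β.symm.toLinearMap ∘ₗ c with hf₀
    set g₀ : N →ₗ[A] M := b ∘ₗ β.symm.toLinearMap with hg₀
    set α₀ : M →ₗ[A] M := a - b ∘ₗ β.symm.toLinearMap ∘ₗ c with hα₀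
    set D : (M × N) ≃ₗ[A] (M × N) := (shearU f₀).symm ≪≫ₗ φ ≪≫ₗ (shearL g₀).symm with hDdef
    have hD : ∀ p : M × N, D p = (α₀ p.1, d p.2) := by
      rintro ⟨x, y⟩
      show (shearL g₀).symm (φ ((shearU f₀).symm (x, y))) = _
      rw [shearU_symm_apply, hφ_app, shearL_symm_apply]
      have e2 : d ((x, y).2 - f₀ (x, y).1) = d y - c x := by
        show d (y - β.symm (c x)) = d y - c x
        rw [map_sub, hdf]
      apply Prod.ext
      · show a x + b (y - f₀ x) - g₀ (c x + d (y - f₀ x)) = α₀ x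
        rw [show d (y - f₀ x) = d y - c x from e2]
        have e3 : c x + (d y - c x) = d y := by abel
        rw [e3]
        show a x + b (y - β.symm (c x)) - b (β.symm (d y)) = α₀ x
        rw [hsd, map_sub]
        show a x + (b y - b (β.symm (c x))) - b y = a x - b (β.symm (c x))
        abel
      · show c x + d (y - f₀ x) = d y
        rw [show d (y - f₀ x) = d y - c x from e2]
        abel
    have hα₀inj : Function.Injective α₀ := by
      intro x x' hxx
      have h1 : D (x, 0) = D (x', 0) := by
        rw [hD, hD]
        simp [hxx]
      have h2 := D.injective h1
      exact congrArg Prod.fst h2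
    have hα₀surj : Function.Surjective α₀ := by
      intro m
      obtain ⟨p, hp⟩ := D.surjective (m, 0)
      rw [hD] at hp
      exact ⟨p.1, congrArg Prod.fst hp⟩
    refine ⟨((LinearEquiv.ofBijective α₀ ⟨hα₀inj, hα₀surj⟩, β), (f₀, g₀)), ?_⟩
    apply LinearEquiv.ext
    intro p
    rw [hΦ_apply, hφ_app p]
    have e4 : β (p.2 + f₀ p.1) = d p.2 + c p.1 := by
      show β (p.2 + β.symm (c p.1)) = d p.2 + c p.1
      rw [map_add, LinearEquiv.apply_symm_apply]
      rfl
    apply Prod.ext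
    · show α₀ p.1 + g₀ (β (p.2 + f₀ p.1)) = a p.1 + b p.2
      rw [e4]
      show α₀ p.1 + b (β.symm (d p.2 + c p.1)) = a p.1 + b p.2
      rw [map_add, hsd, map_add]
      show a p.1 - b (β.symm (c p.1)) + (b p.2 + b (β.symm (c p.1))) = a p.1 + b p.2
      abel
    · show β (p.2 + f₀ p.1) = c p.1 + d p.2
      rw [e4]
      abel
  rw [← Nat.card_congr (Equiv.ofBijective Φ ⟨hΦinj, hΦsurj⟩)]
  rw [Nat.card_prod, Nat.card_prod, Nat.card_prod]
end
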